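/- In a finite Coxeter group W, any closed loop in the graph G(w) of reduced words of w (edges labeled by braid relations) contains an even number of edges corresponding to even braid relations m_{ij} (i.e., with m_{ij} even). -/

import Mathlib

open CoxeterSystem Real

namespace LoopParity



variable {B : Type*}

/-- cosine entries of the standard bilinear form -/
noncomputable def cc (M : CoxeterMatrix B) (i j : B) : ℝ := - Real.cos (Real.pi / (M i j : ℝ))

lemma cc_symm (M : CoxeterMatrix B) (i j : B) : cc M i j = cc M j i := by
  unfold cc; rw [M.symmetric i j]

lemma cc_diag (M : CoxeterMatrix B) (i : B) : cc M i i = 1 := by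
  unfold cc; rw [M.diagonal i]; norm_num

noncomputable def bform (M : CoxeterMatrix B) : (B →₀ ℝ) →ₗ[ℝ] (B →₀ ℝ) →ₗ[ℝ] ℝ :=
  Finsupp.lsum ℝ fun i => LinearMap.toSpanSingleton ℝ _
    (Finsupp.lsum ℝ fun j => LinearMap.toSpanSingleton ℝ ℝ (cc M i j))

lemma bform_single (M : CoxeterMatrix B) (i j : B) :
    bform M (Finsupp.single i 1) (Finsupp.single j 1) = cc M i j := by
  simp [bform, LinearMap.toSpanSingleton_apply]

noncomputable def Qf (M : CoxeterMatrix B) : QuadraticForm ℝ (B →₀ ℝ) :=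
  LinearMap.BilinMap.toQuadraticMap (bform M)

lemma Qf_single (M : CoxeterMatrix B) (b : B) : Qf M (Finsupp.single b 1) = 1 := by
  rw [Qf, LinearMap.BilinMap.toQuadraticMap_apply, bform_single, cc_diag]

noncomputable def ee (M : CoxeterMatrix B) (b : B) : CliffordAlgebra (Qf M) :=
  CliffordAlgebra.ι (Qf M) (Finsupp.single b 1)

lemma ee_sq (M : CoxeterMatrix B) (b : B) : ee M b * ee M b = 1 := by
  rw [ee, CliffordAlgebra.ι_sq_scalar, Qf_single, map_one]

lemma ee_swap (M : CoxeterMatrix B) (i j : B) :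
    ee M j * ee M i = algebraMap ℝ _ (2 * cc M i j) - ee M i * ee M j := by
  rw [eq_sub_iff_add_eq, add_comm, ee, ee, CliffordAlgebra.ι_mul_ι_add_swap]
  congr 1
  rw [Qf, LinearMap.BilinMap.polar_toQuadraticMap, bform_single, bform_single,
    cc_symm M j i]
  ring

lemma x_sq (M : CoxeterMatrix B) (i j : B) :
    (ee M i * ee M j) * (ee M i * ee M j)
      = (2 * cc M i j) • (ee M i * ee M j) - 1 := by
  have h : (ee M i * ee M j) * (ee M i * ee M j)
      = ee M i * ((ee M j * ee M i) * ee M j) := by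
    simp only [mul_assoc]
  rw [h, ee_swap M i j, sub_mul, mul_sub, ← Algebra.smul_def, mul_smul_comm,
    mul_assoc (ee M i) (ee M j) (ee M j), ee_sq, mul_one, ee_sq]



lemma pow_eq_trig {A : Type*} [Ring A] [Algebra ℝ A] (x : A) (θ : ℝ)
    (hs : Real.sin θ ≠ 0) (hx : x * x = (2 * Real.cos θ) • x - 1) (n : ℕ) :
    x ^ n = (-(Real.sin (((n : ℝ) - 1) * θ)) / Real.sin θ) • (1 : A)
      + (Real.sin ((n : ℝ) * θ) / Real.sin θ) • x := by
  induction n with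
  | zero =>
      push_cast
      rw [zero_sub, neg_one_mul, Real.sin_neg, zero_mul, Real.sin_zero, neg_neg,
        div_self hs, zero_div, pow_zero, one_smul, zero_smul, add_zero]
  | succ n ih =>
      have h1 : (-(Real.sin ((((n : ℕ) + 1 : ℝ) - 1) * θ)) / Real.sin θ)
          = -(Real.sin ((n : ℝ) * θ) / Real.sin θ) := by
        push_cast; ring_nf
      have h2 : Real.sin ((((n : ℕ) + 1 : ℝ)) * θ) / Real.sin θ
          = -(Real.sin (((n : ℝ) - 1) * θ)) / Real.sin θ
            + (Real.sin ((n : ℝ) * θ) / Real.sin θ) * (2 * Real.cos θ) := by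
        have e1 : (((n : ℕ) + 1 : ℝ)) * θ = (n : ℝ) * θ + θ := by push_cast; ring
        have e2 : ((n : ℝ) - 1) * θ = (n : ℝ) * θ - θ := by ring
        rw [e1, e2, Real.sin_add, Real.sin_sub]
        field_simp
        ring
      push_cast at h1 h2 ⊢
      rw [pow_succ, ih, add_mul, smul_mul_assoc, smul_mul_assoc, one_mul, hx, h1, h2]
      module

lemma pow_key {A : Type*} [Ring A] [Algebra ℝ A] (x : A) (m : ℕ) (hm : 2 ≤ m)
    (hx : x * x = (2 * (-Real.cos (Real.pi / (m : ℝ)))) • x - 1) :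
    x ^ m = ((-1 : ℝ) ^ (m + 1)) • (1 : A) := by
  have hm0 : (m : ℝ) ≠ 0 := Nat.cast_ne_zero.mpr (by omega)
  set θ : ℝ := Real.pi - Real.pi / m with hθ
  have hcos : Real.cos θ = -Real.cos (Real.pi / m) := Real.cos_pi_sub _
  have hsin : Real.sin θ = Real.sin (Real.pi / m) := Real.sin_pi_sub _
  have hspos : 0 < Real.sin (Real.pi / m) := by
    apply Real.sin_pos_of_pos_of_lt_pi
    · positivity
    · rw [div_lt_iff₀ (by positivity)]
      have h2m : (2:ℝ) ≤ (m:ℝ) := by exact_mod_cast hm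
      nlinarith [Real.pi_pos]
  have hs : Real.sin θ ≠ 0 := by rw [hsin]; exact ne_of_gt hspos
  have hmθ : (m : ℝ) * θ = (m : ℝ) * Real.pi - Real.pi := by
    rw [hθ, mul_sub]
    congr 1
    field_simp
  have hsin_m : Real.sin ((m : ℝ) * θ) = 0 := by
    rw [hmθ, Real.sin_nat_mul_pi_sub, Real.sin_pi, mul_zero, neg_zero]
  have hcos_m : Real.cos ((m : ℝ) * θ) = -(-1 : ℝ) ^ m := by
    rw [hmθ, Real.cos_nat_mul_pi_sub, Real.cos_pi]
    ring
  have hsin_m1 : Real.sin (((m : ℝ) - 1) * θ) = (-1 : ℝ) ^ m * Real.sin θ := by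
    have : ((m : ℝ) - 1) * θ = (m : ℝ) * θ - θ := by ring
    rw [this, Real.sin_sub, hsin_m, hcos_m]
    ring
  rw [pow_eq_trig x θ hs (by rw [hcos]; exact hx) m, hsin_m, hsin_m1, zero_div,
    zero_smul, add_zero]
  congr 1
  field_simp
  ring


noncomputable def FF (M : CoxeterMatrix B) (l : List B) : CliffordAlgebra (Qf M) :=
  (l.map (ee M)).prod

lemma FF_append (M : CoxeterMatrix B) (l₁ l₂ : List B) :
    FF M (l₁ ++ l₂) = FF M l₁ * FF M l₂ := by
  unfold FF; rw [List.map_append, List.prod_append]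

lemma FF_concat (M : CoxeterMatrix B) (l : List B) (b : B) :
    FF M (l.concat b) = FF M l * ee M b := by
  rw [List.concat_eq_append, FF_append]
  unfold FF
  simp

lemma FF_isUnit (M : CoxeterMatrix B) (l : List B) : IsUnit (FF M l) := by
  induction l with
  | nil =>
      rw [show FF M [] = 1 from rfl]
      exact isUnit_one
  | cons b l ih =>
      have : FF M (b :: l) = ee M b * FF M l := by unfold FF; simp
      rw [this]
      exact IsUnit.mul ⟨⟨ee M b, ee M b, ee_sq M b, ee_sq M b⟩, rfl⟩ ih

lemma mul_pow_mul {A : Type*} [Monoid A] (a b : A) (t : ℕ) :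
    a * (b * a) ^ t = (a * b) ^ t * a := by
  induction t with
  | zero => simp
  | succ t ih =>
      rw [pow_succ, ← mul_assoc, ih, pow_succ]
      simp [mul_assoc]

lemma FF_alt_even (M : CoxeterMatrix B) (i j : B) (t : ℕ) :
    FF M (alternatingWord i j (2 * t)) = (ee M i * ee M j) ^ t := by
  induction t generalizing i j with
  | zero => simp [FF, alternatingWord]
  | succ t ih =>
      have h1 : 2 * (t + 1) = (2 * t + 1) + 1 := by ring
      rw [h1, alternatingWord_succ, FF_concat, alternatingWord_succ, FF_concat, ih,
        pow_succ, mul_assoc]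

lemma FF_alt_odd (M : CoxeterMatrix B) (i j : B) (t : ℕ) :
    FF M (alternatingWord i j (2 * t + 1)) = ee M j * (ee M i * ee M j) ^ t := by
  rw [alternatingWord_succ, FF_concat, FF_alt_even, ← mul_pow_mul]

lemma xy_one (M : CoxeterMatrix B) (i j : B) :
    (ee M i * ee M j) * (ee M j * ee M i) = 1 := by
  rw [mul_assoc, ← mul_assoc (ee M j), ee_sq, one_mul, ee_sq]

lemma xy_pow_one (M : CoxeterMatrix B) (i j : B) (t : ℕ) :
    (ee M i * ee M j) ^ t * (ee M j * ee M i) ^ t = 1 := by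
  induction t with
  | zero => simp
  | succ t ih =>
      rw [pow_succ, pow_succ', mul_assoc, ← mul_assoc (ee M i * ee M j),
        xy_one, one_mul, ih]

/-- The key sign identity for braid moves. -/
lemma FF_braid (M : CoxeterMatrix B) (i j : B) (h0 : M i j ≠ 0) :
    FF M (alternatingWord i j (M i j))
      = ((-1 : ℝ) ^ (M i j + 1)) • FF M (alternatingWord j i (M i j)) := by
  by_cases hij : i = j
  · subst hij
    rw [M.diagonal i]
    norm_num
  · have hm1 : M i j ≠ 1 := M.off_diagonal i j hij
    have hm2 : 2 ≤ M i j := by omega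
    set m := M i j with hm
    have hxm : (ee M i * ee M j) ^ m = ((-1 : ℝ) ^ (m + 1)) • (1 : CliffordAlgebra (Qf M)) := by
      apply pow_key _ m hm2
      have := x_sq M i j
      rwa [show cc M i j = -Real.cos (Real.pi / (M i j : ℝ)) from rfl] at this
    have hmji : M j i = m := by rw [hm, M.symmetric]
    rcases Nat.even_or_odd m with hme | hmo
    · -- m even
      obtain ⟨t, ht⟩ := hme
      have ht' : m = 2 * t := by omega
      have hsc : ((-1 : ℝ)) ^ (m + 1) = -1 := Odd.neg_one_pow ⟨t, by omega⟩
      have hx2 : (ee M i * ee M j) ^ m = (-1 : ℝ) • (1 : CliffordAlgebra (Qf M)) := by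
        rw [hxm, hsc]
      rw [ht', FF_alt_even, FF_alt_even, show ((-1 : ℝ)) ^ (2 * t + 1) = -1 from
        Odd.neg_one_pow ⟨t, by ring⟩]
      calc (ee M i * ee M j) ^ t
          = (ee M i * ee M j) ^ (2 * t) * (ee M j * ee M i) ^ t := by
            rw [two_mul, pow_add, mul_assoc, xy_pow_one, mul_one]
        _ = (-1 : ℝ) • (ee M j * ee M i) ^ t := by
            rw [← ht', hx2, smul_mul_assoc, one_mul]
    · -- m odd
      obtain ⟨t, ht⟩ := hmo
      have hx1 : (ee M i * ee M j) ^ m = 1 := by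
        rw [hxm, Even.neg_one_pow ⟨t + 1, by omega⟩, one_smul]
      have hsc : ((-1 : ℝ)) ^ (m + 1) = 1 := Even.neg_one_pow ⟨t + 1, by omega⟩
      rw [hsc, one_smul, ht, FF_alt_odd, FF_alt_odd]
      have h6 : (ee M j * ee M i) ^ t = (ee M i * ee M j) ^ (t + 1) := by
        calc (ee M j * ee M i) ^ t
            = (ee M i * ee M j) ^ (2 * t + 1) * (ee M j * ee M i) ^ t := by
              rw [← ht, hx1, one_mul]
          _ = (ee M i * ee M j) ^ (t + 1)
              * ((ee M i * ee M j) ^ t * (ee M j * ee M i) ^ t) := by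
              rw [show 2 * t + 1 = (t + 1) + t from by ring, pow_add, mul_assoc]
          _ = (ee M i * ee M j) ^ (t + 1) := by rw [xy_pow_one, mul_one]
      rw [h6, pow_succ', ← mul_assoc, ← mul_assoc, ee_sq, one_mul]

noncomputable def eu (M : CoxeterMatrix B) (b : B) : (CliffordAlgebra (Qf M))ˣ :=
  ⟨ee M b, ee M b, ee_sq M b, ee_sq M b⟩

lemma pow_central (M : CoxeterMatrix B) (k l : B) :
    ((eu M k * eu M l) ^ (M k l)) ∈ Subgroup.center (CliffordAlgebra (Qf M))ˣ := by
  have hval : (((eu M k * eu M l) ^ (M k l) : (CliffordAlgebra (Qf M))ˣ) :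
      CliffordAlgebra (Qf M)) = (ee M k * ee M l) ^ (M k l) := by
    rw [Units.val_pow_eq_pow_val, Units.val_mul]; rfl
  by_cases hkl : k = l
  · subst hkl
    rw [M.diagonal k]
    have : eu M k * eu M k = 1 := by
      apply Units.ext
      rw [Units.val_mul, Units.val_one]; exact ee_sq M k
    rw [pow_one, this]
    exact Subgroup.one_mem _
  · by_cases h0 : M k l = 0
    · rw [h0, pow_zero]; exact Subgroup.one_mem _
    · have hm2 : 2 ≤ M k l := by
        have := M.off_diagonal k l hkl
        omega
      have hxm : (ee M k * ee M l) ^ (M k l)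
          = ((-1 : ℝ) ^ (M k l + 1)) • (1 : CliffordAlgebra (Qf M)) := by
        apply pow_key _ _ hm2
        have := x_sq M k l
        rwa [show cc M k l = -Real.cos (Real.pi / (M k l : ℝ)) from rfl] at this
      rw [Subgroup.mem_center_iff]
      intro g
      apply Units.ext
      rw [Units.val_mul, Units.val_mul, hval, hxm, mul_smul_comm, smul_mul_assoc,
        mul_one, one_mul]

lemma x_pow_formula {A : Type*} [Ring A] [Algebra ℝ A] (x : A)
    (hx : x * x = (-2 : ℝ) • x - 1) (d : ℕ) :
    x ^ d = ((-1 : ℝ) ^ d) • (1 : A) + ((-1 : ℝ) ^ (d + 1) * d) • (x + 1) := by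
  induction d with
  | zero => simp
  | succ d ih =>
      have hs1 : ((-1 : ℝ)) ^ (d + 1) = (-1) ^ d * (-1) := pow_succ _ _
      have hs2 : ((-1 : ℝ)) ^ (d + 2) = (-1) ^ d := by
        rw [pow_succ, pow_succ]; ring
      have hc : ((d + 1 : ℕ) : ℝ) = (d : ℝ) + 1 := by push_cast; ring
      rw [pow_succ, ih, add_mul, smul_mul_assoc, smul_mul_assoc, one_mul, add_mul,
        hx, one_mul, hc, show (d : ℕ) + 1 + 1 = d + 2 from rfl, hs1, hs2]
      module

lemma M_ne_zero {W : Type*} [Group W] [Finite W] (M : CoxeterMatrix B)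
    (cs : CoxeterSystem M W) (i j : B) : M i j ≠ 0 := by
  by_cases hij : i = j
  · subst hij; rw [M.diagonal i]; omega
  intro h0
  set G := (CliffordAlgebra (Qf M))ˣ with hG
  let f : B → G ⧸ Subgroup.center G := fun b => QuotientGroup.mk' _ (eu M b)
  have hf : CoxeterMatrix.IsLiftable M f := by
    intro k l
    show ((QuotientGroup.mk' (Subgroup.center G)) (eu M k)
      * (QuotientGroup.mk' (Subgroup.center G)) (eu M l)) ^ (M k l) = 1
    rw [← map_mul, ← map_pow]
    rw [QuotientGroup.mk'_apply, QuotientGroup.eq_one_iff]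
    exact pow_central M k l
  set d := orderOf (cs.simple i * cs.simple j) with hd
  have hdpos : 0 < d := orderOf_pos _
  have h1 : (cs.simple i * cs.simple j) ^ d = 1 := pow_orderOf_eq_one _
  have h2 : ((eu M i * eu M j) ^ d) ∈ Subgroup.center G := by
    rw [← QuotientGroup.eq_one_iff]
    have h1' := congrArg (cs.lift ⟨f, hf⟩) h1
    rw [map_one, map_pow, map_mul, cs.lift_apply_simple hf i,
      cs.lift_apply_simple hf j] at h1'
    simpa [f] using h1'
  have h3 := Subgroup.mem_center_iff.mp h2 (eu M i)
  have h4 : ee M i * (ee M i * ee M j) ^ d = (ee M i * ee M j) ^ d * ee M i := by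
    have := congrArg (Units.val) h3
    rw [Units.val_mul, Units.val_mul, Units.val_pow_eq_pow_val, Units.val_mul] at this
    exact this
  have hc : cc M i j = -1 := by
    rw [show cc M i j = -Real.cos (Real.pi / (M i j : ℝ)) from rfl, h0]
    norm_num
  have hx : (ee M i * ee M j) * (ee M i * ee M j) = (-2 : ℝ) • (ee M i * ee M j) - 1 := by
    have := x_sq M i j
    rw [hc] at this
    norm_num at this
    convert this using 2
    norm_num
  have hxd := x_pow_formula _ hx d
  have eix : ee M i * (ee M i * ee M j) = ee M j := by
    rw [← mul_assoc, ee_sq, one_mul]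
  have xei : (ee M i * ee M j) * ee M i = (-2 : ℝ) • ee M i - ee M j := by
    rw [mul_assoc, ee_swap M i j, mul_sub, ← Algebra.commutes (2 * cc M i j) (ee M i),
      ← Algebra.smul_def, eix, hc]
    norm_num
  have key : ((2 : ℝ) * ((-1 : ℝ) ^ (d + 1) * d)) • (ee M i + ee M j) = 0 := by
    have h5 : ee M i * (ee M i * ee M j) ^ d - (ee M i * ee M j) ^ d * ee M i
        = ((2 : ℝ) * ((-1 : ℝ) ^ (d + 1) * d)) • (ee M i + ee M j) := by
      rw [hxd, mul_add, add_mul, mul_smul_comm, mul_smul_comm, smul_mul_assoc,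
        smul_mul_assoc, mul_one, one_mul, mul_add, add_mul, eix, xei, mul_one, one_mul]
      module
    rw [h4, sub_self] at h5
    exact h5.symm
  have hne : ((2 : ℝ) * ((-1 : ℝ) ^ (d + 1) * d)) ≠ 0 := by
    apply mul_ne_zero two_ne_zero
    apply mul_ne_zero (pow_ne_zero _ (by norm_num))
    exact Nat.cast_ne_zero.mpr hdpos.ne'
  have hsum : ee M i + ee M j = 0 := by
    have h6 : ee M i + ee M j
        = (((2 : ℝ) * ((-1 : ℝ) ^ (d + 1) * d))⁻¹)
          • (((2 : ℝ) * ((-1 : ℝ) ^ (d + 1) * d)) • (ee M i + ee M j)) := by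
      rw [smul_smul, inv_mul_cancel₀ hne, one_smul]
    rw [key, smul_zero] at h6
    exact h6
  have hι : CliffordAlgebra.ι (Qf M) (Finsupp.single i (1 : ℝ) + Finsupp.single j 1) = 0 := by
    rw [map_add]; exact hsum
  have hv : (Finsupp.single i (1 : ℝ) + Finsupp.single j 1) = 0 := by
    have h7 := congrArg (CliffordAlgebra.equivExterior (Qf M)) hι
    rw [map_zero] at h7
    rw [show (CliffordAlgebra.equivExterior (Qf M)) (CliffordAlgebra.ι (Qf M)
        (Finsupp.single i (1 : ℝ) + Finsupp.single j 1))
      = ExteriorAlgebra.ι ℝ (Finsupp.single i (1 : ℝ) + Finsupp.single j 1) from by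
        simp [CliffordAlgebra.equivExterior, CliffordAlgebra.changeForm_ι]] at h7
    exact (ExteriorAlgebra.ι_eq_zero_iff _).mp h7
  have h8 := congrArg (fun g => g i) hv
  simp only [Finsupp.add_apply, Finsupp.single_eq_same, Finsupp.coe_zero, Pi.zero_apply,
    Finsupp.single_eq_of_ne' (Ne.symm hij)] at h8
  norm_num at h8

end LoopParity

open LoopParity in
/-- In a finite Coxeter group, any closed loop in the graph of reduced words of `w`
(with edges given by braid moves) contains an even number of edges corresponding to
even braid relations, i.e. braid relations `m i j` with `m i j` even. -/
theorem loop_even_number_of_even_braid_moves {B : Type*} (M : CoxeterMatrix B) {W : Type*}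
    [Group W] [Finite W] (cs : CoxeterSystem M W) (w : W)
    (n : ℕ) (path : ℕ → List B) (i j : ℕ → B)
    (hvert : ∀ k ≤ n, cs.wordProd (path k) = w ∧ cs.IsReduced (path k))
    (hstep : ∀ k < n, ∃ u v : List B,
      path k = u ++ CoxeterSystem.alternatingWord (i k) (j k) (M (i k) (j k)) ++ v ∧
      path (k + 1) = u ++ CoxeterSystem.alternatingWord (j k) (i k) (M (i k) (j k)) ++ v)
    (hloop : path n = path 0) :
    Even ((Finset.range n).filter (fun k => Even (M (i k) (j k)))).card := by
  classical
  have hM0 : ∀ a b : B, M a b ≠ 0 := M_ne_zero M cs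
  have step : ∀ k, k < n → FF M (path k)
      = ((-1 : ℝ) ^ (M (i k) (j k) + 1)) • FF M (path (k + 1)) := by
    intro k hk
    obtain ⟨u, v, h1, h2⟩ := hstep k hk
    rw [h1, h2, FF_append, FF_append, FF_append, FF_append,
      FF_braid M (i k) (j k) (hM0 _ _), mul_smul_comm, smul_mul_assoc]
  have tele : ∀ k, k ≤ n → FF M (path 0)
      = ((-1 : ℝ) ^ (((Finset.range k).filter
          (fun t => Even (M (i t) (j t)))).card)) • FF M (path k) := by
    intro k
    induction k with
    | zero => intro _; simp
    | succ k ih =>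
        intro hk1
        have hk : k < n := by omega
        rw [ih (by omega), step k hk, Finset.range_add_one, Finset.filter_insert]
        by_cases he : Even (M (i k) (j k))
        · rw [if_pos he, Finset.card_insert_of_notMem (by simp)]
          have hodd : ((-1 : ℝ)) ^ (M (i k) (j k) + 1) = -1 :=
            Odd.neg_one_pow he.add_one
          rw [hodd, smul_smul, ← pow_succ]
        · rw [if_neg he]
          have heven : ((-1 : ℝ)) ^ (M (i k) (j k) + 1) = 1 :=
            Even.neg_one_pow (Nat.not_even_iff_odd.mp he).add_one
          rw [heven, one_smul]
  have hN := tele n le_rfl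
  rw [hloop] at hN
  obtain ⟨u, hu⟩ := FF_isUnit M (path 0)
  set r : ℝ := ((-1 : ℝ) ^ (((Finset.range n).filter
      (fun t => Even (M (i t) (j t)))).card)) with hr
  have h9 : (1 : CliffordAlgebra (Qf M)) = r • 1 := by
    have h12 := congrArg (fun z => z * (↑u⁻¹ : CliffordAlgebra (Qf M))) hN
    simp only [smul_mul_assoc] at h12
    rw [← hu, Units.mul_inv] at h12
    exact h12
  have h10 : r = 1 := by
    have h11 : algebraMap ℝ (CliffordAlgebra (Qf M)) r = algebraMap ℝ _ 1 := by
      rw [Algebra.algebraMap_eq_smul_one, map_one, ← h9]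
    exact RingHom.injective _ h11
  exact (neg_one_pow_eq_one_iff_even (by norm_num : (-1 : ℝ) ≠ 1)).mp h10
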